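/- For every real λ > 0 and every real k > 1, there exists a constant C > 0, depending only on k and λ, such that for all x, y > 0: 2·x·y·|ln y|^λ ≤ x²·( k·4^{(λ−1)⁺}·|ln x|^{2λ} + C ) + y². -/

import Mathlib

open Real

-- L1: power of sum
lemma aux_L1 {lam : ℝ} (hlam : 0 < lam) {a b : ℝ} (ha : 0 ≤ a) (hb : 0 ≤ b) :
    (a + b) ^ lam ≤ 2 ^ (max (lam - 1) 0) * (a ^ lam + b ^ lam) := by
  rcases le_total lam 1 with h1 | h1
  · rw [max_eq_right (by linarith), rpow_zero, one_mul]
    have key := NNReal.rpow_add_le_add_rpow a.toNNReal b.toNNReal hlam.le h1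
    have := NNReal.coe_le_coe.mpr key
    push_cast [NNReal.coe_rpow, Real.coe_toNNReal a ha, Real.coe_toNNReal b hb] at this
    exact this
  · rw [max_eq_left (by linarith)]
    have key := NNReal.rpow_add_le_mul_rpow_add_rpow a.toNNReal b.toNNReal h1
    have := NNReal.coe_le_coe.mpr key
    push_cast [NNReal.coe_rpow, Real.coe_toNNReal a ha, Real.coe_toNNReal b hb] at this
    exact this

-- L2: log bound
lemma aux_L2 {lam : ℝ} (hlam : 0 < lam) {u : ℝ} (hu : 0 < u) :
    u * |Real.log u| ^ lam ≤ (2 * lam) ^ lam * (u ^ ((1:ℝ)/2) + u ^ ((3:ℝ)/2)) := by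
  have h2l : (0:ℝ) < 2 * lam := by linarith
  have ht : (0:ℝ) < 1 / (2 * lam) := by positivity
  set t := 1 / (2 * lam) with htdef
  have htl : t * lam = 1 / 2 := by rw [htdef]; field_simp
  rcases le_total 1 u with h1 | h1
  · -- u ≥ 1
    have hlog : |Real.log u| = Real.log u := abs_of_nonneg (Real.log_nonneg h1)
    have hle : Real.log u ≤ 2 * lam * u ^ t := by
      have := Real.log_le_rpow_div hu.le ht
      rw [div_eq_mul_inv, htdef] at this
      calc Real.log u ≤ u ^ (1/(2*lam)) * (1/(2*lam))⁻¹ := this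
        _ = 2 * lam * u ^ t := by rw [htdef, one_div, inv_inv]; ring
    have hpow : |Real.log u| ^ lam ≤ (2 * lam * u ^ t) ^ lam := by
      rw [hlog]
      exact Real.rpow_le_rpow (Real.log_nonneg h1) hle hlam.le
    have heq : (2 * lam * u ^ t) ^ lam = (2 * lam) ^ lam * u ^ ((1:ℝ)/2) := by
      rw [Real.mul_rpow h2l.le (Real.rpow_nonneg hu.le _), ← Real.rpow_mul hu.le, htl]
    have h32 : u * u ^ ((1:ℝ)/2) = u ^ ((3:ℝ)/2) := by
      rw [show (3:ℝ)/2 = 1 + 1/2 by norm_num, Real.rpow_add hu, Real.rpow_one]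
    calc u * |Real.log u| ^ lam ≤ u * ((2*lam) ^ lam * u ^ ((1:ℝ)/2)) := by
          rw [heq] at hpow; exact mul_le_mul_of_nonneg_left hpow hu.le
      _ = (2*lam) ^ lam * u ^ ((3:ℝ)/2) := by rw [← h32]; ring
      _ ≤ (2*lam) ^ lam * (u ^ ((1:ℝ)/2) + u ^ ((3:ℝ)/2)) := by
          have : (0:ℝ) ≤ u ^ ((1:ℝ)/2) := Real.rpow_nonneg hu.le _
          nlinarith [Real.rpow_nonneg hu.le lam, Real.rpow_nonneg h2l.le lam]
  · -- u ≤ 1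
    have hlog : |Real.log u| = Real.log u⁻¹ := by
      rw [Real.log_inv, abs_of_nonpos (Real.log_nonpos hu.le h1)]
    have hle : Real.log u⁻¹ ≤ 2 * lam * u ^ (-t) := by
      have := Real.log_le_rpow_div (inv_nonneg.mpr hu.le) ht
      rw [div_eq_mul_inv] at this
      calc Real.log u⁻¹ ≤ (u⁻¹) ^ t * t⁻¹ := this
        _ = 2 * lam * u ^ (-t) := by
            rw [← Real.rpow_neg_one u, ← Real.rpow_mul hu.le, htdef]
            rw [one_div, inv_inv]
            ring
    have hpow : |Real.log u| ^ lam ≤ (2 * lam * u ^ (-t)) ^ lam := by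
      rw [hlog]
      exact Real.rpow_le_rpow (Real.log_nonneg (one_le_inv_iff₀.mpr ⟨hu, h1⟩)) hle hlam.le
    have heq : (2 * lam * u ^ (-t)) ^ lam = (2 * lam) ^ lam * u ^ (-(1:ℝ)/2) := by
      rw [Real.mul_rpow h2l.le (Real.rpow_nonneg hu.le _), ← Real.rpow_mul hu.le]
      have : -t * lam = -(1:ℝ)/2 := by rw [neg_mul, htl]; ring
      rw [this]
    have h12 : u * u ^ (-(1:ℝ)/2) = u ^ ((1:ℝ)/2) := by
      rw [show (1:ℝ)/2 = 1 + (-1/2) by norm_num, Real.rpow_add hu, Real.rpow_one]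
    calc u * |Real.log u| ^ lam ≤ u * ((2*lam) ^ lam * u ^ (-(1:ℝ)/2)) := by
          rw [heq] at hpow; exact mul_le_mul_of_nonneg_left hpow hu.le
      _ = (2*lam) ^ lam * u ^ ((1:ℝ)/2) := by rw [← h12]; ring
      _ ≤ (2*lam) ^ lam * (u ^ ((1:ℝ)/2) + u ^ ((3:ℝ)/2)) := by
          nlinarith [Real.rpow_nonneg hu.le ((3:ℝ)/2), Real.rpow_nonneg h2l.le lam]

-- L3: final constant bound
lemma aux_L3 {B eps : ℝ} (hB : 0 < B) (heps : 0 < eps) :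
    ∃ C : ℝ, 0 < C ∧ ∀ u : ℝ, 0 < u → B * (u ^ ((1:ℝ)/2) + u ^ ((3:ℝ)/2)) ≤ eps * u ^ 2 + C := by
  set M : ℝ := max 1 ((2 * B / eps) ^ 2) with hMdef
  have hM1 : (1:ℝ) ≤ M := le_max_left _ _
  have hM0 : (0:ℝ) < M := lt_of_lt_of_le one_pos hM1
  refine ⟨B * (M ^ ((1:ℝ)/2) + M ^ ((3:ℝ)/2)), by positivity, fun u hu => ?_⟩
  rcases le_total u M with h | h
  · have h1 : u ^ ((1:ℝ)/2) ≤ M ^ ((1:ℝ)/2) := Real.rpow_le_rpow hu.le h (by norm_num)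
    have h2 : u ^ ((3:ℝ)/2) ≤ M ^ ((3:ℝ)/2) := Real.rpow_le_rpow hu.le h (by norm_num)
    nlinarith [sq_nonneg u, mul_pos heps (mul_pos hu hu)]
  · -- u ≥ M
    have hu1 : (1:ℝ) ≤ u := le_trans hM1 h
    have h12 : u ^ ((1:ℝ)/2) ≤ u ^ ((3:ℝ)/2) :=
      Real.rpow_le_rpow_of_exponent_le hu1 (by norm_num)
    have hsq : u ^ ((1:ℝ)/2) * u ^ ((3:ℝ)/2) = u ^ 2 := by
      rw [← Real.rpow_add hu, ← Real.rpow_natCast u 2]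
      norm_num
    have hroot : 2 * B / eps ≤ u ^ ((1:ℝ)/2) := by
      have hch : (2 * B / eps) ^ 2 ≤ u := le_trans (le_max_right _ _) h
      have : ((2 * B / eps) ^ 2) ^ ((1:ℝ)/2) ≤ u ^ ((1:ℝ)/2) :=
        Real.rpow_le_rpow (by positivity) hch (by norm_num)
      calc 2 * B / eps = ((2 * B / eps) ^ 2) ^ ((1:ℝ)/2) := by
            rw [← Real.rpow_natCast (2*B/eps) 2, ← Real.rpow_mul (by positivity)]
            norm_num
        _ ≤ u ^ ((1:ℝ)/2) := this
    have h0a : (0:ℝ) ≤ u ^ ((3:ℝ)/2) := Real.rpow_nonneg hu.le _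
    have h0b : (0:ℝ) ≤ u ^ ((1:ℝ)/2) := Real.rpow_nonneg hu.le _
    have key : 2 * B * u ^ ((3:ℝ)/2) ≤ eps * u ^ 2 := by
      have := mul_le_mul_of_nonneg_right hroot h0a
      rw [div_mul_eq_mul_div] at this
      rw [← hsq]
      calc 2 * B * u ^ ((3:ℝ)/2) ≤ eps * (u ^ ((1:ℝ)/2) * u ^ ((3:ℝ)/2)) := by
            rw [div_le_iff₀ heps] at this; nlinarith
        _ = eps * (u ^ ((1:ℝ)/2) * u ^ ((3:ℝ)/2)) := rfl
    have hC : 0 < B * (M ^ ((1:ℝ)/2) + M ^ ((3:ℝ)/2)) := by positivity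
    nlinarith


/-- Proposition 2.2, first assertion: for every `λ > 0` and `k > 1` there is a constant
`C > 0` (depending only on `k, λ`) such that for all `x, y > 0`,
`2·x·y·|ln y|^λ ≤ x²·(k·4^{(λ-1)⁺}·|ln x|^{2λ} + C) + y²`. -/
theorem stmt_0 (lam k : ℝ) (hlam : 0 < lam) (hk : 1 < k) :
    ∃ C : ℝ, 0 < C ∧ ∀ x y : ℝ, 0 < x → 0 < y →
      2 * x * y * |Real.log y| ^ lam ≤
        x ^ 2 * (k * (4 : ℝ) ^ (max (lam - 1) 0) * |Real.log x| ^ (2 * lam) + C) + y ^ 2 := by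
  have hk0 : (0:ℝ) < k := by linarith
  set p : ℝ := max (lam - 1) 0 with hpdef
  have h2p : (0:ℝ) < 2 ^ p := Real.rpow_pos_of_pos two_pos p
  have h2lam : (0:ℝ) < (2*lam) ^ lam := Real.rpow_pos_of_pos (by linarith) lam
  have hB : (0:ℝ) < 2 * 2 ^ p * (2*lam) ^ lam := by positivity
  have heps : (0:ℝ) < (k-1)/k := div_pos (by linarith) hk0
  obtain ⟨C, hC, hCb⟩ := aux_L3 hB heps
  refine ⟨C, hC, fun x y hx hy => ?_⟩
  have hx0 : x ≠ 0 := hx.ne'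
  set a := |Real.log x| with hadef
  set b := |Real.log (y/x)| with hbdef
  have ha : 0 ≤ a := abs_nonneg _
  have hb : 0 ≤ b := abs_nonneg _
  have habs : |Real.log y| ≤ a + b := by
    have h : Real.log y = Real.log x + Real.log (y/x) := by
      rw [Real.log_div hy.ne' hx.ne']; ring
    rw [h]; exact abs_add_le _ _
  have hstep : |Real.log y| ^ lam ≤ 2 ^ p * (a ^ lam + b ^ lam) :=
    le_trans (Real.rpow_le_rpow (abs_nonneg _) habs hlam.le) (aux_L1 hlam ha hb)
  have hmain : 2 * x * y * |Real.log y| ^ lam ≤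
      2 * x * y * (2 ^ p * a ^ lam) + 2 * x * y * (2 ^ p * b ^ lam) := by
    calc 2 * x * y * |Real.log y| ^ lam
        ≤ 2 * x * y * (2 ^ p * (a ^ lam + b ^ lam)) :=
          mul_le_mul_of_nonneg_left hstep (by positivity)
      _ = 2 * x * y * (2 ^ p * a ^ lam) + 2 * x * y * (2 ^ p * b ^ lam) := by ring
  -- term 1
  have hT1 : 2 * x * y * (2 ^ p * a ^ lam) ≤
      k * (4:ℝ) ^ p * (x ^ 2 * a ^ (2*lam)) + y ^ 2 / k := by
    set A := 2 ^ p * x * a ^ lam with hAdef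
    have hA : 0 ≤ A := by positivity
    have hAsq : A ^ 2 = (4:ℝ) ^ p * (x ^ 2 * a ^ (2*lam)) := by
      have h4 : (4:ℝ) ^ p = 2 ^ p * 2 ^ p := by
        rw [show (4:ℝ) = 2 * 2 by norm_num,
          Real.mul_rpow (by norm_num) (by norm_num)]
      have hab2 : a ^ (2*lam) = a ^ lam * a ^ lam := by
        rw [show (2:ℝ)*lam = lam + lam by ring]
        exact Real.rpow_add' ha (by intro hcon; linarith)
      rw [h4, hab2, hAdef]; ring
    have key : 2 * A * y ≤ k * A ^ 2 + y ^ 2 / k := by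
      have h' : y ^ 2 / k * k = y ^ 2 := div_mul_cancel₀ _ hk0.ne'
      nlinarith [sq_nonneg (k * A - y), hk0, h']
    calc 2 * x * y * (2 ^ p * a ^ lam) = 2 * A * y := by rw [hAdef]; ring
      _ ≤ k * A ^ 2 + y ^ 2 / k := key
      _ = k * (4:ℝ) ^ p * (x ^ 2 * a ^ (2*lam)) + y ^ 2 / k := by rw [hAsq]; ring
  -- term 2
  have hT2 : 2 * x * y * (2 ^ p * b ^ lam) ≤ (k-1)/k * y ^ 2 + C * x ^ 2 := by
    have hu : 0 < y / x := div_pos hy hx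
    have hL2 := aux_L2 hlam hu
    have hL3 := hCb (y/x) hu
    have hchain : 2 * 2 ^ p * (y/x * b ^ lam) ≤ (k-1)/k * (y/x) ^ 2 + C := by
      calc 2 * 2 ^ p * (y/x * b ^ lam)
          ≤ 2 * 2 ^ p * ((2*lam) ^ lam * ((y/x) ^ ((1:ℝ)/2) + (y/x) ^ ((3:ℝ)/2))) :=
            mul_le_mul_of_nonneg_left hL2 (by positivity)
        _ = 2 * 2 ^ p * (2*lam) ^ lam * ((y/x) ^ ((1:ℝ)/2) + (y/x) ^ ((3:ℝ)/2)) := by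
            ring
        _ ≤ (k-1)/k * (y/x) ^ 2 + C := hL3
    calc 2 * x * y * (2 ^ p * b ^ lam)
        = x ^ 2 * (2 * 2 ^ p * (y/x * b ^ lam)) := by field_simp
      _ ≤ x ^ 2 * ((k-1)/k * (y/x) ^ 2 + C) :=
          mul_le_mul_of_nonneg_left hchain (by positivity)
      _ = (k-1)/k * y ^ 2 + C * x ^ 2 := by field_simp
  have hsum : y ^ 2 / k + (k-1)/k * y ^ 2 = y ^ 2 := by field_simp; ring
  calc 2 * x * y * |Real.log y| ^ lam
      ≤ 2 * x * y * (2 ^ p * a ^ lam) + 2 * x * y * (2 ^ p * b ^ lam) := hmain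
    _ ≤ (k * (4:ℝ) ^ p * (x ^ 2 * a ^ (2*lam)) + y ^ 2 / k) +
        ((k-1)/k * y ^ 2 + C * x ^ 2) := add_le_add hT1 hT2
    _ = x ^ 2 * (k * (4:ℝ) ^ p * a ^ (2*lam) + C) + (y ^ 2 / k + (k-1)/k * y ^ 2) := by
        ring
    _ = x ^ 2 * (k * (4:ℝ) ^ p * a ^ (2*lam) + C) + y ^ 2 := by rw [hsum]
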